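/- Let H be a polynomial in d+1 complex variables satisfying the torality condition: whenever (z₁,…,z_d) lies on the unit torus and H(z)=0, then |z_{d+1}|=1. If p is a point of V₁ = {H=0} ∩ (unit torus in ℂ^{d+1}) with ∇H(p) ≠ 0, then ∂H/∂z_{d+1}(p) ≠ 0. -/

import Mathlib

open MvPolynomial Complex Set Function

lemma hasDerivAt_eval_update {σ : Type*} [DecidableEq σ] (H : MvPolynomial σ ℂ) (i : σ)
    (z : σ → ℂ) (t : ℂ) :
    HasDerivAt (fun s => eval (Function.update z i s) H)
      (eval (Function.update z i t) (pderiv i H)) t := by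
  induction H using MvPolynomial.induction_on with
  | C a => simpa using hasDerivAt_const t (a : ℂ)
  | add p q hp hq => simp only [map_add]; exact hp.add hq
  | mul_X p j hp =>
      have hXj : HasDerivAt (fun s : ℂ => Function.update z i s j)
          (if j = i then 1 else 0) t := by
        rcases eq_or_ne j i with h | h
        · subst h
          simpa using hasDerivAt_id' t
        · simpa [Function.update_of_ne h, h] using hasDerivAt_const t (z j)
      have h2 := hp.mul hXj
      have h3 : (fun s => eval (Function.update z i s) (p * X j)) =
          fun s => eval (Function.update z i s) p * Function.update z i s j := by
        funext s; simp
      rw [h3]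
      have h2' : HasDerivAt (fun s => eval (Function.update z i s) p * Function.update z i s j) _ t := h2
      convert h2' using 1
      simp only [pderiv_mul, pderiv_X, map_add, eval_mul, eval_X, Pi.single_apply,
        apply_ite (MvPolynomial.eval (Function.update z i t)), map_zero, map_one]
      try split_ifs <;> ring

lemma three_cos_lemma {x y z c : ℝ} (h1 : Real.cos x = c) (h2 : Real.cos y = c)
    (h3 : Real.cos z = c) (hxy : x < y) (hyz : y < z) (hzx : z - x < 2 * Real.pi) : False := by
  have hpi := Real.pi_pos
  have key : ∀ m : ℤ, ¬ (0 < 2 * (m : ℝ) * Real.pi ∧ 2 * (m : ℝ) * Real.pi < 2 * Real.pi) := by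
    rintro m ⟨hm1, hm2⟩
    have hm0 : 0 < (m : ℝ) := by nlinarith
    have : (1 : ℤ) ≤ m := by exact_mod_cast hm0
    have : (1 : ℝ) ≤ (m : ℝ) := by exact_mod_cast this
    nlinarith
  obtain ⟨k, hk⟩ := Real.cos_eq_cos_iff.mp (h1.trans h2.symm)
  rcases hk with hk | hk
  · exact key k ⟨by nlinarith, by nlinarith⟩
  obtain ⟨m, hm⟩ := Real.cos_eq_cos_iff.mp (h1.trans h3.symm)
  rcases hm with hm | hm
  · exact key m ⟨by nlinarith, by nlinarith⟩
  -- y = 2kπ - x, z = 2mπ - x, so z - y = 2(m-k)π ∈ (0, 2π)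
  have h1' : 0 < 2 * ((m - k : ℤ) : ℝ) * Real.pi := by push_cast; nlinarith
  have h2' : 2 * ((m - k : ℤ) : ℝ) * Real.pi < 2 * Real.pi := by push_cast; nlinarith
  exact key (m - k) ⟨h1', h2'⟩

set_option maxHeartbeats 1600000 in
lemma no_multiple_root (Φ : ℂ × ℂ → ℂ) (pJ w₀ : ℂ) (hpJ : ‖pJ‖ = 1) (hw₀n : ‖w₀‖ = 1)
    (hkey : ∀ x w : ℂ, ‖x‖ = 1 → Φ (x, w) = 0 → ‖w‖ = 1)
    (u g : ℂ → ℂ) (k : ℕ) (hk2 : 2 ≤ k)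
    (hgan : AnalyticAt ℂ g w₀) (hgc : g w₀ ≠ 0)
    (hfac : ∀ᶠ w in nhds w₀, u w - pJ = (w - w₀) ^ k • g w)
    (hev : ∀ᶠ w in nhds w₀, Φ (u w, w) = 0) : False := by
  set c : ℂ := g w₀ with hcdef
  have hcn : 0 < ‖c‖ := norm_pos_iff.mpr hgc
  set c' : ℂ := (starRingEnd ℂ) pJ * c with hc'def
  have hc'n : ‖c'‖ = ‖c‖ := by
    rw [hc'def, norm_mul]
    rw [Complex.norm_conj, hpJ, one_mul]
  set β : ℝ := c'.arg with hβdef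
  have hc'exp : c' = ((‖c‖ : ℝ) : ℂ) * Complex.exp (β * Complex.I) := by
    conv_lhs => rw [← Complex.norm_mul_exp_arg_mul_I c']
    rw [hc'n]
  set γ : ℝ := w₀.arg with hγdef
  have hw₀exp : w₀ = Complex.exp ((γ : ℂ) * Complex.I) := by
    conv_lhs => rw [← Complex.norm_mul_exp_arg_mul_I w₀]
    rw [hw₀n]
    simp [hγdef]
  have hS3 : ∀ᶠ w in nhds w₀, ‖g w - c‖ ≤ ‖c‖ / 4 := by
    have hcb : Metric.closedBall c (‖c‖ / 4) ∈ nhds c :=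
      Metric.closedBall_mem_nhds c (by positivity)
    have := hgan.continuousAt hcb
    filter_upwards [this] with w hw
    rw [← dist_eq_norm]
    exact Metric.mem_closedBall.mp hw
  have hS4 : ∀ᶠ w in nhds w₀, AnalyticAt ℂ g w := hgan.eventually_analyticAt
  obtain ⟨ε, hεpos, hball⟩ :=
    Metric.eventually_nhds_iff_ball.mp (hfac.and (hev.and (hS3.and hS4)))
  set r : ℝ := min (ε / 2) (min 1 (1 / (9 * ‖c‖ + 1))) with hrdef
  have hr0 : 0 < r := by
    apply lt_min (by linarith)
    apply lt_min (by norm_num)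
    positivity
  have hrε : r < ε := lt_of_le_of_lt (min_le_left _ _) (by linarith)
  have hr1 : r ≤ 1 := le_trans (min_le_right _ _) (min_le_left _ _)
  have hrc : r * (9 / 4 * ‖c‖ ^ 2) ≤ ‖c‖ / 4 := by
    have h : r ≤ 1 / (9 * ‖c‖ + 1) := le_trans (min_le_right _ _) (min_le_right _ _)
    have h2 : r * (9 * ‖c‖ + 1) ≤ 1 := by
      rw [le_div_iff₀ (by positivity)] at h
      exact h
    nlinarith [hr0.le, hcn.le]
  set W : ℝ → ℂ := fun θ => w₀ + (r : ℂ) * Complex.exp ((θ : ℂ) * Complex.I) with hWdef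
  have hWsub : ∀ θ : ℝ, W θ - w₀ = (r : ℂ) * Complex.exp ((θ : ℂ) * Complex.I) := by
    intro θ; rw [hWdef]; ring
  have hWball : ∀ θ, W θ ∈ Metric.ball w₀ ε := by
    intro θ
    rw [Metric.mem_ball, dist_eq_norm, hWsub θ, norm_mul, Complex.norm_exp_ofReal_mul_I,
      mul_one, Complex.norm_real, Real.norm_eq_abs, abs_of_pos hr0]
    exact hrε
  have hprops := fun θ => hball _ (hWball θ)
  set q : ℝ → ℂ := fun θ => ((r : ℂ) * Complex.exp ((θ : ℂ) * Complex.I)) ^ k * g (W θ)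
    with hqdef
  have huW : ∀ θ, u (W θ) = pJ + q θ := by
    intro θ
    have h1 := (hprops θ).1
    rw [hWsub θ] at h1
    have h2 : u (W θ) - pJ = ((r : ℂ) * Complex.exp ((θ : ℂ) * Complex.I)) ^ k * g (W θ) := by
      rw [← smul_eq_mul]
      exact h1
    linear_combination h2
  set F : ℝ → ℝ := fun θ => Complex.normSq (pJ + q θ) - 1 with hFdef
  have hFcont : Continuous F := by
    rw [continuous_iff_continuousAt]
    intro θ
    have hgW : ContinuousAt g (W θ) := ((hprops θ).2.2.2).continuousAt
    have hWc : Continuous W := by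
      apply continuous_const.add
      exact continuous_const.mul (Complex.continuous_exp.comp
        (Complex.continuous_ofReal.mul continuous_const))
    apply ContinuousAt.sub _ continuousAt_const
    apply Complex.continuous_normSq.continuousAt.comp
    apply ContinuousAt.add continuousAt_const
    exact ContinuousAt.mul (by fun_prop) (hgW.comp hWc.continuousAt)
  -- zeros of F lie on the circle, giving a cosine constraint
  have hzero : ∀ θ : ℝ, F θ = 0 → Real.cos (γ - θ) = -r / 2 := by
    intro θ hFθ
    have hns1 : Complex.normSq (pJ + q θ) = 1 := by
      rw [hFdef] at hFθ
      simp only at hFθ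
      linarith
    have hun : ‖u (W θ)‖ = 1 := by
      have h2 : ‖u (W θ)‖ ^ 2 = 1 := by
        rw [huW θ, Complex.sq_norm, hns1]
      nlinarith [norm_nonneg (u (W θ))]
    have hΦW : Φ (u (W θ), W θ) = 0 := (hprops θ).2.1
    have hWn : ‖W θ‖ = 1 := hkey _ _ hun hΦW
    have hns : Complex.normSq (W θ) = 1 := by
      rw [← Complex.sq_norm, hWn]; norm_num
    have hconj : (starRingEnd ℂ) ((r : ℂ) * Complex.exp ((θ : ℂ) * Complex.I)) =
        (r : ℂ) * Complex.exp ((-θ : ℝ) * Complex.I) := by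
      rw [map_mul, Complex.conj_ofReal, ← Complex.exp_conj, map_mul, Complex.conj_ofReal,
        Complex.conj_I]
      push_cast
      ring_nf
    have e2 : w₀ * Complex.exp (((-θ : ℝ) : ℂ) * Complex.I) =
        Complex.exp (((γ - θ : ℝ) : ℂ) * Complex.I) := by
      rw [hw₀exp, ← Complex.exp_add]
      congr 1
      push_cast
      ring
    have h3 : (w₀ * (starRingEnd ℂ) ((r : ℂ) * Complex.exp ((θ : ℂ) * Complex.I))).re =
        r * Real.cos (γ - θ) := by
      rw [hconj, show w₀ * ((r : ℂ) * Complex.exp (((-θ : ℝ) : ℂ) * Complex.I)) =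
          (r : ℂ) * (w₀ * Complex.exp (((-θ : ℝ) : ℂ) * Complex.I)) from by ring,
        e2, Complex.re_ofReal_mul, Complex.exp_ofReal_mul_I_re]
    have h4 : Complex.normSq ((r : ℂ) * Complex.exp ((θ : ℂ) * Complex.I)) = r ^ 2 := by
      rw [Complex.normSq_mul, Complex.normSq_eq_norm_sq, Complex.normSq_eq_norm_sq,
        Complex.norm_exp_ofReal_mul_I, Complex.norm_real, Real.norm_eq_abs, abs_of_pos hr0]
      norm_num
    have h5 : Complex.normSq w₀ = 1 := by
      rw [← Complex.sq_norm, hw₀n]; norm_num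
    rw [hWdef] at hns
    simp only at hns
    rw [Complex.normSq_add, h5, h4, h3] at hns
    have h6 : r * (2 * Real.cos (γ - θ) + r) = 0 := by nlinarith
    rcases mul_eq_zero.mp h6 with h | h
    · exact absurd h (ne_of_gt hr0)
    · linarith
  -- sign of F at special angles
  have hsign : ∀ θ s : ℝ,
      Complex.exp (((k * θ : ℝ) : ℂ) * Complex.I) * Complex.exp ((β : ℂ) * Complex.I) =
        ((s : ℝ) : ℂ) →
      (s = 1 → 0 < F θ) ∧ (s = -1 → F θ < 0) := by
    intro θ s hs
    have hq' : q θ = (r : ℂ) ^ k *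
        (Complex.exp (((k * θ : ℝ) : ℂ) * Complex.I) * g (W θ)) := by
      rw [hqdef]
      simp only
      rw [mul_pow, ← Complex.exp_nat_mul]
      push_cast
      ring_nf
    set Eθ : ℂ := Complex.exp (((k * θ : ℝ) : ℂ) * Complex.I) with hEθdef
    have hEθn : ‖Eθ‖ = 1 := Complex.norm_exp_ofReal_mul_I _
    set D : ℂ := Eθ * (starRingEnd ℂ) pJ * (g (W θ) - c) with hDdef
    have hDn : ‖D‖ ≤ ‖c‖ / 4 := by
      rw [hDdef, norm_mul, norm_mul, hEθn, RCLike.norm_conj, hpJ, one_mul, one_mul]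
      exact (hprops θ).2.2.1
    have hX : (starRingEnd ℂ) pJ * q θ = (r : ℂ) ^ k * (((‖c‖ : ℝ) : ℂ) * (s : ℂ) + D) := by
      rw [hq', hDdef]
      have hcc : Eθ * c' = ((‖c‖ : ℝ) : ℂ) * (s : ℂ) := by
        rw [hc'exp, hEθdef]
        rw [show Complex.exp (((k * θ : ℝ) : ℂ) * Complex.I) *
            (((‖c‖ : ℝ) : ℂ) * Complex.exp ((β : ℂ) * Complex.I)) =
            ((‖c‖ : ℝ) : ℂ) * (Complex.exp (((k * θ : ℝ) : ℂ) * Complex.I) *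
              Complex.exp ((β : ℂ) * Complex.I)) from by ring]
        rw [hs]
      calc (starRingEnd ℂ) pJ * ((r : ℂ) ^ k * (Eθ * g (W θ)))
          = (r : ℂ) ^ k * (Eθ * c' + Eθ * (starRingEnd ℂ) pJ * (g (W θ) - c)) := by
            rw [hc'def]; ring
        _ = (r : ℂ) ^ k * (((‖c‖ : ℝ) : ℂ) * (s : ℂ) + Eθ * (starRingEnd ℂ) pJ *
            (g (W θ) - c)) := by rw [hcc]
    have hXre : ((starRingEnd ℂ) pJ * q θ).re = r ^ k * (‖c‖ * s + D.re) := by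
      rw [hX, show ((r : ℂ)) ^ k = ((r ^ k : ℝ) : ℂ) from by push_cast; ring,
        Complex.re_ofReal_mul]
      congr 1
      rw [Complex.add_re]
      congr 1
      rw [show ((‖c‖ : ℝ) : ℂ) * ((s : ℝ) : ℂ) = (((‖c‖ * s : ℝ)) : ℂ) from by push_cast; ring]
      exact Complex.ofReal_re _
    have hDre : |D.re| ≤ ‖c‖ / 4 := by
      refine le_trans ?_ hDn
      exact Complex.abs_re_le_norm D
    have hrk0 : 0 < r ^ k := pow_pos hr0 k
    have hrk1 : r ^ k ≤ r := by
      calc r ^ k ≤ r ^ 1 := pow_le_pow_of_le_one hr0.le hr1 (by omega)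
        _ = r := pow_one r
    have hqn : ‖q θ‖ ≤ r ^ k * (5 / 4 * ‖c‖) := by
      rw [hq', norm_mul, norm_mul, hEθn, one_mul, norm_pow, Complex.norm_real,
        Real.norm_eq_abs, abs_of_pos hr0]
      have hgb : ‖g (W θ)‖ ≤ 5 / 4 * ‖c‖ := by
        have h1 := (hprops θ).2.2.1
        have h2 : ‖g (W θ)‖ ≤ ‖c‖ + ‖g (W θ) - c‖ := by
          calc ‖g (W θ)‖ = ‖c + (g (W θ) - c)‖ := by ring_nf
            _ ≤ ‖c‖ + ‖g (W θ) - c‖ := norm_add_le _ _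
        linarith
      exact mul_le_mul_of_nonneg_left hgb hrk0.le
    have hnsq : Complex.normSq (q θ) ≤ r ^ k * (‖c‖ / 4) := by
      rw [Complex.normSq_eq_norm_sq]
      have h1 : ‖q θ‖ ^ 2 ≤ (r ^ k * (5 / 4 * ‖c‖)) ^ 2 :=
        pow_le_pow_left₀ (norm_nonneg _) hqn 2
      have h2 : (r ^ k * (5 / 4 * ‖c‖)) ^ 2 ≤ r ^ k * (‖c‖ / 4) := by
        have h3 : (r ^ k * (5 / 4 * ‖c‖)) ^ 2 = r ^ k * (r ^ k * (25 / 16 * ‖c‖ ^ 2)) := by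
          ring
        rw [h3]
        apply mul_le_mul_of_nonneg_left _ hrk0.le
        calc r ^ k * (25 / 16 * ‖c‖ ^ 2) ≤ r * (25 / 16 * ‖c‖ ^ 2) := by
              apply mul_le_mul_of_nonneg_right hrk1 (by positivity)
          _ ≤ r * (9 / 4 * ‖c‖ ^ 2) := by nlinarith [hr0.le, sq_nonneg ‖c‖]
          _ ≤ ‖c‖ / 4 := hrc
      linarith
    have hFθ : F θ = 2 * (r ^ k * (‖c‖ * s + D.re)) + Complex.normSq (q θ) := by
      rw [hFdef]
      simp only
      rw [Complex.normSq_add]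
      have hnpJ : Complex.normSq pJ = 1 := by
        rw [← Complex.sq_norm, hpJ]; norm_num
      have hre : (pJ * (starRingEnd ℂ) (q θ)).re = ((starRingEnd ℂ) pJ * q θ).re := by
        rw [← Complex.conj_re (pJ * (starRingEnd ℂ) (q θ)), map_mul, Complex.conj_conj]
      rw [hnpJ, hre, hXre]
      ring
    constructor
    · intro hs1
      rw [hFθ, hs1]
      have : -( ‖c‖ / 4) ≤ D.re := by
        have := abs_le.mp hDre
        linarith [this.1]
      nlinarith [Complex.normSq_nonneg (q θ)]
    · intro hs1
      rw [hFθ, hs1]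
      have : D.re ≤ ‖c‖ / 4 := (abs_le.mp hDre).2
      nlinarith
  -- the four special angles
  have hkR : (0 : ℝ) < (k : ℝ) := by
    have : 0 < k := by omega
    exact_mod_cast this
  set θf : ℕ → ℝ := fun m => (m * Real.pi - β) / k with hθfdef
  have hθexp : ∀ m : ℕ, Complex.exp (((k * θf m : ℝ) : ℂ) * Complex.I) *
      Complex.exp ((β : ℂ) * Complex.I) =
      Complex.exp (((m * Real.pi : ℝ) : ℂ) * Complex.I) := by
    intro m
    rw [← Complex.exp_add]
    congr 1
    have hx : (k : ℝ) * θf m = m * Real.pi - β := by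
      rw [hθfdef]
      field_simp
    rw [hx]
    push_cast
    ring
  have hF0 : 0 < F (θf 0) := by
    refine (hsign (θf 0) 1 ?_).1 rfl
    rw [hθexp 0]
    norm_num [Complex.exp_zero]
  have hF1 : F (θf 1) < 0 := by
    refine (hsign (θf 1) (-1) ?_).2 rfl
    rw [hθexp 1]
    push_cast
    rw [one_mul, Complex.exp_pi_mul_I]
  have hF2 : 0 < F (θf 2) := by
    refine (hsign (θf 2) 1 ?_).1 rfl
    rw [hθexp 2]
    push_cast
    rw [Complex.exp_two_pi_mul_I]
  have hF3 : F (θf 3) < 0 := by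
    refine (hsign (θf 3) (-1) ?_).2 rfl
    rw [hθexp 3]
    push_cast
    rw [show (3 : ℂ) * (Real.pi : ℂ) * Complex.I =
        2 * (Real.pi : ℂ) * Complex.I + (Real.pi : ℂ) * Complex.I from by ring,
      Complex.exp_add, Complex.exp_two_pi_mul_I, Complex.exp_pi_mul_I, one_mul]
  have hθlt : ∀ m n : ℕ, m < n → θf m < θf n := by
    intro m n h
    rw [hθfdef]
    simp only
    apply div_lt_div_of_pos_right ?_ hkR
    have : (m : ℝ) * Real.pi < n * Real.pi := by
      apply mul_lt_mul_of_pos_right _ Real.pi_pos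
      exact_mod_cast h
    linarith
  -- intermediate value theorem: three zeros of F
  obtain ⟨ζ₁, hζ₁I, hζ₁⟩ :=
    intermediate_value_Icc' (hθlt 0 1 (by norm_num)).le hFcont.continuousOn ⟨hF1.le, hF0.le⟩
  obtain ⟨ζ₂, hζ₂I, hζ₂⟩ :=
    intermediate_value_Icc (hθlt 1 2 (by norm_num)).le hFcont.continuousOn ⟨hF1.le, hF2.le⟩
  obtain ⟨ζ₃, hζ₃I, hζ₃⟩ :=
    intermediate_value_Icc' (hθlt 2 3 (by norm_num)).le hFcont.continuousOn ⟨hF3.le, hF2.le⟩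
  have h12 : ζ₁ < ζ₂ := by
    rcases eq_or_lt_of_le (hζ₁I.2 : ζ₁ ≤ θf 1) with heq | hlt
    · rw [heq] at hζ₁; rw [hζ₁] at hF1; linarith
    · exact lt_of_lt_of_le hlt hζ₂I.1
  have h23 : ζ₂ < ζ₃ := by
    rcases eq_or_lt_of_le (hζ₂I.2 : ζ₂ ≤ θf 2) with heq | hlt
    · rw [heq] at hζ₂; rw [hζ₂] at hF2; linarith
    · exact lt_of_lt_of_le hlt hζ₃I.1
  have hwin : ζ₃ - ζ₁ < 2 * Real.pi := by
    have hw1 : θf 0 ≤ ζ₁ := hζ₁I.1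
    have hw2 : ζ₃ ≤ θf 3 := hζ₃I.2
    have hkR2 : (2 : ℝ) ≤ (k : ℝ) := by exact_mod_cast hk2
    have hdiff : θf 3 - θf 0 = 3 * Real.pi / k := by
      rw [hθfdef]
      field_simp
      push_cast; ring
    have h2π : θf 3 - θf 0 < 2 * Real.pi := by
      rw [hdiff, div_lt_iff₀ hkR]
      nlinarith [Real.pi_pos]
    linarith
  exact three_cos_lemma (hzero ζ₃ hζ₃) (hzero ζ₂ hζ₂) (hzero ζ₁ hζ₁)
    (by linarith) (by linarith) (by linarith)

set_option maxHeartbeats 1600000 in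
/-- If H is a polynomial in d+1 variables satisfying torality
(whenever the first d coordinates lie on the unit torus and H(z)=0, then |z_{d+1}|=1),
and p is a point of V₁ = {H=0} ∩ (unit torus) with ∇H(p) ≠ 0, then
∂H/∂z_{d+1}(p) ≠ 0. -/
theorem torality_forces_last_partial_nonzero (d : ℕ) (H : MvPolynomial (Fin (d + 1)) ℂ)
    (htoral : ∀ z : Fin (d + 1) → ℂ, (∀ i : Fin d, ‖z i.castSucc‖ = 1) →
      eval z H = 0 → ‖z (Fin.last d)‖ = 1)
    (p : Fin (d + 1) → ℂ) (hp : ∀ i, ‖p i‖ = 1) (hpH : eval p H = 0)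
    (hgrad : ∃ i, eval p (pderiv i H) ≠ 0) :
    eval p (pderiv (Fin.last d) H) ≠ 0 := by
  intro hlast
  obtain ⟨i0, hA0⟩ := hgrad
  have hi0ne : i0 ≠ Fin.last d := by rintro rfl; exact hA0 hlast
  set w₀ : ℂ := p (Fin.last d) with hw₀def
  set pJ : ℂ := p i0 with hpJdef
  have hpJ : ‖pJ‖ = 1 := hp i0
  have hw₀n : ‖w₀‖ = 1 := hp (Fin.last d)
  set E : ℂ × ℂ → Fin (d + 1) → ℂ :=
    fun x m => if m = Fin.last d then x.2 else if m = i0 then x.1 else p m with hEdef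
  set Φ : ℂ × ℂ → ℂ := fun x => eval (E x) H with hΦdef
  set a : ℂ × ℂ := (pJ, w₀) with hadef
  -- basic facts about E
  have hE1 : ∀ t : ℂ, E (t, w₀) = Function.update p i0 t := by
    intro t; funext m
    rcases eq_or_ne m (Fin.last d) with rfl | hm
    · simp [hEdef, hw₀def, Function.update_of_ne (Ne.symm hi0ne)]
    · rcases eq_or_ne m i0 with rfl | hm2
      · simp [hEdef, hm]
      · simp [hEdef, hm, hm2, Function.update_of_ne hm2]
  have hE2 : ∀ s : ℂ, E (pJ, s) = Function.update p (Fin.last d) s := by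
    intro s; funext m
    rcases eq_or_ne m (Fin.last d) with rfl | hm
    · simp [hEdef]
    · rcases eq_or_ne m i0 with rfl | hm2
      · simp [hEdef, hm, hpJdef, Function.update_of_ne hm]
      · simp [hEdef, hm, hm2, Function.update_of_ne hm]
  have hEa : E a = p := by
    rw [hadef, hE2, Function.update_eq_self]
  -- torality repackaged
  have hkey : ∀ x w : ℂ, ‖x‖ = 1 → Φ (x, w) = 0 → ‖w‖ = 1 := by
    intro x w hx h0
    have h1 : ∀ i : Fin d, ‖E (x, w) i.castSucc‖ = 1 := by
      intro i
      have hne' : (i.castSucc : Fin (d + 1)) ≠ Fin.last d := (Fin.castSucc_lt_last i).ne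
      rw [hEdef]
      simp only [if_neg hne']
      split_ifs with h
      · exact hx
      · exact hp _
    have h2 := htoral (E (x, w)) h1 h0
    rwa [show E (x, w) (Fin.last d) = w from by simp [hEdef]] at h2
  -- analyticity of Φ
  have hΦan : ∀ x : ℂ × ℂ, AnalyticAt ℂ Φ x := by
    intro x
    apply AnalyticAt.comp (g := fun z : Fin (d + 1) → ℂ => eval z H) (f := E)
    · exact (AnalyticOnNhd.eval_mvPolynomial H) (E x) (Set.mem_univ _)
    · rw [hEdef]
      apply AnalyticAt.pi
      intro m
      rcases eq_or_ne m (Fin.last d) with rfl | hm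
      · simpa using analyticAt_snd
      · rcases eq_or_ne m i0 with rfl | hm2
        · simp only [if_neg hm, if_pos rfl]; exact analyticAt_fst
        · simp only [if_neg hm, if_neg hm2]; exact analyticAt_const
  have hΦL : HasFDerivAt Φ (fderiv ℂ Φ a) a := (hΦan a).differentiableAt.hasFDerivAt
  -- partial derivatives of Φ at a
  have hL10 : fderiv ℂ Φ a (1, 0) = eval p (pderiv i0 H) := by
    have hline : HasDerivAt (fun t : ℂ => ((t, w₀) : ℂ × ℂ)) (1, 0) pJ :=
      (hasDerivAt_id pJ).prodMk (hasDerivAt_const pJ w₀)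
    have h10 : HasDerivAt (fun t => Φ (t, w₀)) (fderiv ℂ Φ a (1, 0)) pJ :=
      HasFDerivAt.comp_hasDerivAt_of_eq (x := pJ) hΦL hline rfl
    have h := hasDerivAt_eval_update H i0 p pJ
    rw [hpJdef, Function.update_eq_self] at h
    have heq : (fun t => Φ (t, w₀)) = fun s => eval (Function.update p i0 s) H := by
      funext t; rw [hΦdef]; simp only; rw [hE1]
    rw [heq] at h10
    exact h10.unique h
  have hL01 : fderiv ℂ Φ a (0, 1) = 0 := by
    have hline : HasDerivAt (fun s : ℂ => ((pJ, s) : ℂ × ℂ)) (0, 1) w₀ :=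
      (hasDerivAt_const w₀ pJ).prodMk (hasDerivAt_id w₀)
    have h01 : HasDerivAt (fun s => Φ (pJ, s)) (fderiv ℂ Φ a (0, 1)) w₀ :=
      HasFDerivAt.comp_hasDerivAt_of_eq (x := w₀) hΦL hline rfl
    have h := hasDerivAt_eval_update H (Fin.last d) p w₀
    rw [hw₀def, Function.update_eq_self] at h
    rw [hlast] at h
    have heq : (fun s => Φ (pJ, s)) = fun s => eval (Function.update p (Fin.last d) s) H := by
      funext s; rw [hΦdef]; simp only; rw [hE2]
    rw [heq] at h01
    exact h01.unique h
  have hLeq : ∀ h : ℂ × ℂ, fderiv ℂ Φ a h = eval p (pderiv i0 H) * h.1 := by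
    intro h
    have hsplit : h = h.1 • ((1 : ℂ), (0 : ℂ)) + h.2 • ((0 : ℂ), (1 : ℂ)) := by
      ext <;> simp
    conv_lhs => rw [hsplit]
    rw [map_add, map_smul, map_smul, hL10, hL01]
    simp [mul_comm]
  -- the local diffeomorphism ψ
  set ψ : ℂ × ℂ → ℂ × ℂ := fun x => (Φ x, x.2) with hψdef
  set A : ℂ := eval p (pderiv i0 H) with hAdef
  set M : (ℂ × ℂ) ≃L[ℂ] ℂ × ℂ := ContinuousLinearEquiv.equivOfInverse
    ((A • ContinuousLinearMap.fst ℂ ℂ ℂ).prod (ContinuousLinearMap.snd ℂ ℂ ℂ))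
    ((A⁻¹ • ContinuousLinearMap.fst ℂ ℂ ℂ).prod (ContinuousLinearMap.snd ℂ ℂ ℂ))
    (fun x => by
      simp only [ContinuousLinearMap.prod_apply, ContinuousLinearMap.smul_apply,
        ContinuousLinearMap.coe_fst', ContinuousLinearMap.coe_snd', smul_eq_mul]
      refine Prod.ext ?_ rfl
      simp only
      field_simp)
    (fun x => by
      simp only [ContinuousLinearMap.prod_apply, ContinuousLinearMap.smul_apply,
        ContinuousLinearMap.coe_fst', ContinuousLinearMap.coe_snd', smul_eq_mul]
      refine Prod.ext ?_ rfl
      simp only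
      field_simp) with hMdef
  have hMcoe : (M : (ℂ × ℂ) →L[ℂ] ℂ × ℂ) =
      (A • ContinuousLinearMap.fst ℂ ℂ ℂ).prod (ContinuousLinearMap.snd ℂ ℂ ℂ) := rfl
  have hψd : HasFDerivAt ψ (M : (ℂ × ℂ) →L[ℂ] ℂ × ℂ) a := by
    rw [hMcoe]
    have hf1 : HasFDerivAt Φ (A • ContinuousLinearMap.fst ℂ ℂ ℂ) a := by
      have heq : (A • ContinuousLinearMap.fst ℂ ℂ ℂ) = fderiv ℂ Φ a := by
        apply ContinuousLinearMap.ext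
        intro h
        rw [hLeq h]
        simp [mul_comm]
      rw [heq]; exact hΦL
    exact hf1.prodMk hasFDerivAt_snd
  have hψc : ContDiffAt ℂ 1 ψ a := ((hΦan a).contDiffAt).prodMk contDiffAt_snd
  set G : ℂ × ℂ → ℂ × ℂ := hψc.localInverse hψd one_ne_zero with hGdef
  have hGa : G (ψ a) = a := hψc.localInverse_apply_image hψd one_ne_zero
  have hstrict : HasStrictFDerivAt ψ (M : (ℂ × ℂ) →L[ℂ] ℂ × ℂ) a :=
    hψc.hasStrictFDerivAt' hψd one_ne_zero
  have hGright : ∀ᶠ y in nhds (ψ a), ψ (G y) = y := hstrict.eventually_right_inverse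
  have hGcd : ContDiffAt ℂ 1 G (ψ a) := hψc.to_localInverse hψd one_ne_zero
  obtain ⟨U, hU, hGdiffOn'⟩ := hGcd.contDiffOn le_rfl (by norm_num)
  have hGdiff : DifferentiableOn ℂ G U := hGdiffOn'.differentiableOn one_ne_zero
  have hψa : ψ a = ((0 : ℂ), w₀) := by
    have hΦa : Φ a = 0 := by rw [hΦdef]; simp only; rw [hEa]; exact hpH
    rw [hψdef]; simp only; rw [hΦa]
  -- the implicit function u
  set u : ℂ → ℂ := fun w => (G (0, w)).1 with hudef
  have hι : Continuous fun w : ℂ => ((0 : ℂ), w) := continuous_const.prodMk continuous_id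
  have hU' : (fun w : ℂ => ((0 : ℂ), w)) ⁻¹' U ∈ nhds w₀ := by
    apply hι.continuousAt.preimage_mem_nhds
    rw [← hψa]; exact hU
  have hudiffOn : DifferentiableOn ℂ u ((fun w : ℂ => ((0 : ℂ), w)) ⁻¹' U) := by
    intro w hw
    have h1 : DifferentiableWithinAt ℂ (fun w : ℂ => ((0 : ℂ), w))
        ((fun w : ℂ => ((0 : ℂ), w)) ⁻¹' U) w :=
      ((differentiable_const _).prodMk differentiable_id).differentiableAt.differentiableWithinAt
    have h2 := (hGdiff _ hw).comp w h1 (Set.mapsTo_preimage _ _)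
    exact differentiableAt_fst.comp_differentiableWithinAt w h2
  have huan : AnalyticAt ℂ u w₀ := hudiffOn.analyticAt hU'
  have hu0 : u w₀ = pJ := by
    have h := congrArg Prod.fst hGa
    rw [hψa] at h
    exact h
  have hGsnd : ∀ᶠ w in nhds w₀, ψ (G (0, w)) = ((0 : ℂ), w) := by
    have ht : Filter.Tendsto (fun w : ℂ => ((0 : ℂ), w)) (nhds w₀) (nhds (ψ a)) := by
      rw [hψa]; exact hι.tendsto w₀
    exact ht.eventually hGright
  have hev : ∀ᶠ w in nhds w₀, Φ (u w, w) = 0 := by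
    filter_upwards [hGsnd] with w hw
    have h2 : (G (0, w)).2 = w := congrArg Prod.snd hw
    have h1 : Φ (G (0, w)) = 0 := congrArg Prod.fst hw
    have h3 : ((u w, w) : ℂ × ℂ) = G (0, w) := Prod.ext rfl h2.symm
    rw [h3]; exact h1
  -- derivative of u at w₀ is zero
  have hu' : HasDerivAt u (deriv u w₀) w₀ := huan.differentiableAt.hasDerivAt
  have hu'0 : deriv u w₀ = 0 := by
    have hpair : HasDerivAt (fun w : ℂ => ((u w, w) : ℂ × ℂ)) (deriv u w₀, 1) w₀ :=
      hu'.prodMk (hasDerivAt_id w₀)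
    have hcomp' := HasFDerivAt.comp_hasDerivAt_of_eq (x := w₀) hΦL hpair (by rw [hu0])
    have hcomp : HasDerivAt (fun w => Φ (u w, w)) (fderiv ℂ Φ a (deriv u w₀, 1)) w₀ := hcomp'
    have hzero' : HasDerivAt (fun w => Φ (u w, w)) 0 w₀ :=
      (hasDerivAt_const w₀ (0 : ℂ)).congr_of_eventuallyEq (hev.mono fun w h => h)
    have h := hcomp.unique hzero'
    rw [hLeq] at h
    simp only at h
    rcases mul_eq_zero.mp h with h | h
    · exact absurd h hA0
    · exact h
  -- the order of u - pJ at w₀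
  set v : ℂ → ℂ := fun w => u w - pJ with hvdef
  have hvan : AnalyticAt ℂ v w₀ := huan.sub analyticAt_const
  have hv0 : v w₀ = 0 := by rw [hvdef]; simp [hu0]
  rcases eq_or_ne (analyticOrderAt v w₀) ⊤ with htop | hne
  · -- u is locally constant equal to pJ : contradiction with torality
    have hvev : ∀ᶠ w in nhds w₀, v w = 0 := analyticOrderAt_eq_top.mp htop
    obtain ⟨ε, hε, hball⟩ := Metric.eventually_nhds_iff_ball.mp (hvev.and hev)
    set w : ℂ := w₀ + ((ε / 2 : ℝ) : ℂ) * w₀ with hwdef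
    have hwball : w ∈ Metric.ball w₀ ε := by
      rw [Metric.mem_ball, dist_eq_norm]
      have h1 : w - w₀ = ((ε / 2 : ℝ) : ℂ) * w₀ := by rw [hwdef]; ring
      rw [h1, norm_mul, hw₀n, mul_one, Complex.norm_real, Real.norm_eq_abs,
        abs_of_pos (by linarith)]
      linarith
    obtain ⟨hv0', hΦ0⟩ := hball w hwball
    have hupJ : u w = pJ := by
      have : u w - pJ = 0 := hv0'
      linear_combination this
    have hnw : ‖w‖ = 1 := hkey (u w) w (by rw [hupJ]; exact hpJ) hΦ0
    have hnw2 : ‖w‖ = 1 + ε / 2 := by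
      rw [show w = ((1 + ε / 2 : ℝ) : ℂ) * w₀ from by rw [hwdef]; push_cast; ring]
      rw [norm_mul, hw₀n, mul_one, Complex.norm_real, Real.norm_eq_abs,
        abs_of_pos (by linarith)]
    rw [hnw] at hnw2
    linarith
  · -- finite order k
    obtain ⟨k, hk⟩ := WithTop.ne_top_iff_exists.mp hne
    obtain ⟨g, hgan, hgc, hfac⟩ := (hvan.analyticOrderAt_eq_natCast (n := k)).mp hk.symm
    have hk0 : k ≠ 0 := by
      rintro rfl
      have h := hfac.self_of_nhds
      rw [hv0] at h
      simp at h
      exact hgc h.symm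
    have hk1 : k ≠ 1 := by
      rintro rfl
      have h1 : HasDerivAt (fun w : ℂ => w - w₀) 1 w₀ := (hasDerivAt_id w₀).sub_const w₀
      have h2 := h1.mul (hgan.differentiableAt.hasDerivAt)
      have hrhs : HasDerivAt (fun w : ℂ => (w - w₀) ^ 1 • g w) (g w₀) w₀ := by
        simp only [pow_one, smul_eq_mul]
        have h2' : HasDerivAt (fun w : ℂ => (w - w₀) * g w) _ w₀ := h2
        simpa using h2'
      have hlhs : HasDerivAt v (g w₀) w₀ :=
        hrhs.congr_of_eventuallyEq (hfac.mono fun w h => h)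
      have hv' : HasDerivAt v 0 w₀ := by
        have := hu'.sub_const pJ
        rw [hu'0] at this
        exact this
      exact hgc (hlhs.unique hv')
    have hk2 : 2 ≤ k := by omega
    exact no_multiple_root Φ pJ w₀ hpJ hw₀n hkey u g k hk2 hgan hgc hfac hev
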